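/- The binary tetrahedral group ⟨s, t | s³ = t³ = (st)², (st)⁴ = 1⟩ is isomorphic to SL(2, 𝔽₃) via the map sending t to −A and s to −B, where A = [[1,1],[0,1]] and B = [[1,0],[1,1]] in SL(2, 𝔽₃). -/

import Mathlib

open Matrix

instance : Fact (Even (Fintype.card (Fin 2))) := ⟨by decide⟩

/-- Relators of the presentation `⟨s, t | s³ = t³ = (st)², (st)⁴ = 1⟩` of the
binary tetrahedral group, with `s = FreeGroup.of true`, `t = FreeGroup.of false`. -/
def btetRels : Set (FreeGroup Bool) :=
  {(FreeGroup.of true) ^ 3 * ((FreeGroup.of false) ^ 3)⁻¹,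
   (FreeGroup.of true) ^ 3 * ((FreeGroup.of true * FreeGroup.of false) ^ 2)⁻¹,
   (FreeGroup.of true * FreeGroup.of false) ^ 4}

/-- The binary tetrahedral group `⟨s, t | s³ = t³ = (st)², (st)⁴ = 1⟩`. -/
def BTet : Type := PresentedGroup btetRels

instance : Group BTet := by unfold BTet; infer_instance

/-- The elementary matrix `A = [[1,1],[0,1]]` in `SL(2, 𝔽₃)`. -/
def Asl : Matrix.SpecialLinearGroup (Fin 2) (ZMod 3) :=
  ⟨!![1, 1; 0, 1], by decide⟩

/-- The elementary matrix `B = [[1,0],[1,1]]` in `SL(2, 𝔽₃)`. -/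
def Bsl : Matrix.SpecialLinearGroup (Fin 2) (ZMod 3) :=
  ⟨!![1, 0; 1, 1], by decide⟩

instance : DecidableEq (Matrix.SpecialLinearGroup (Fin 2) (ZMod 3)) :=
  fun a b => decidable_of_iff (a.1 = b.1) Subtype.ext_iff.symm

private def sE : BTet := PresentedGroup.of true
private def tE : BTet := PresentedGroup.of false

private lemma rel_one {r : FreeGroup Bool} (h : r ∈ btetRels) :
    (PresentedGroup.mk btetRels r : BTet) = 1 :=
  (QuotientGroup.eq_one_iff _).mpr (Subgroup.subset_normalClosure h)

private lemma mk_t : (PresentedGroup.mk btetRels (FreeGroup.of false) : BTet) = tE := rfl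
private lemma mk_s : (PresentedGroup.mk btetRels (FreeGroup.of true) : BTet) = sE := rfl

private lemma hT3 : tE*tE*tE = sE*sE*sE := by
  have h := rel_one (r := (FreeGroup.of true) ^ 3 * ((FreeGroup.of false) ^ 3)⁻¹) (Or.inl rfl)
  rw [_root_.map_mul, map_inv, map_pow, map_pow, mk_s, mk_t, mul_inv_eq_one] at h
  rw [show tE*tE*tE = tE^3 by simp [pow_succ, mul_assoc],
      show sE*sE*sE = sE^3 by simp [pow_succ, mul_assoc]]; exact h.symm

private lemma hST : sE*tE*sE*tE = sE*sE*sE := by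
  have h := rel_one
    (r := (FreeGroup.of true) ^ 3 * ((FreeGroup.of true * FreeGroup.of false) ^ 2)⁻¹)
    (Or.inr (Or.inl rfl))
  rw [_root_.map_mul, map_inv, map_pow, map_pow, _root_.map_mul, mk_s, mk_t,
      mul_inv_eq_one] at h
  rw [show sE*tE*sE*tE = (sE*tE)^2 by simp [pow_succ, mul_assoc],
      show sE*sE*sE = sE^3 by simp [pow_succ, mul_assoc]]; exact h.symm

private lemma hO : (sE*tE)^4 = 1 := by
  have h := rel_one (r := (FreeGroup.of true * FreeGroup.of false) ^ 4) (Or.inr (Or.inr rfl))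
  rw [map_pow, _root_.map_mul, mk_s, mk_t] at h
  exact h

private lemma B1 : sE*tE*sE = tE*tE :=
  mul_right_cancel (b := tE) (by
    calc sE*tE*sE*tE = sE*sE*sE := hST
      _ = tE*tE*tE := hT3.symm)

private lemma B2 : tE*sE*tE = sE*sE :=
  mul_left_cancel (a := sE) (by
    calc sE*(tE*sE*tE) = sE*tE*sE*tE := by simp only [mul_assoc]
      _ = sE*sE*sE := hST
      _ = sE*(sE*sE) := by simp only [mul_assoc])

private lemma B6 : sE*sE*sE*sE*sE*sE = 1 := by
  calc sE*sE*sE*sE*sE*sE = (sE*tE*sE*tE)*(sE*tE*sE*tE) := by rw [hST]; simp only [mul_assoc]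
    _ = (sE*tE)^4 := by simp [pow_succ, mul_assoc]
    _ = 1 := hO

private lemma B4 : tE*sE*sE*sE = sE*sE*sE*tE := by
  calc tE*sE*sE*sE = tE*sE*sE*sE := rfl
    _ = tE*(sE*sE*sE) := by simp only [mul_assoc]
    _ = tE*(sE*tE*sE*tE) := by rw [← hST]
    _ = tE*sE*tE*sE*tE := by simp only [mul_assoc, one_mul, mul_one]
    _ = (tE*sE*tE)*(sE*tE) := by simp only [mul_assoc]
    _ = (sE*sE)*(sE*tE) := by rw [B2]
    _ = sE*sE*sE*tE := by simp only [mul_assoc, one_mul, mul_one]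

private lemma B5 : sE*sE*sE*sE*tE = tE*tE*sE*sE := by
  calc sE*sE*sE*sE*tE = sE*sE*sE*sE*tE := rfl
    _ = (sE*sE*sE)*(sE*tE) := by simp only [mul_assoc]
    _ = (tE*tE*tE)*(sE*tE) := by rw [← hT3]
    _ = tE*tE*tE*sE*tE := by simp only [mul_assoc, one_mul, mul_one]
    _ = (tE*tE)*(tE*sE*tE) := by simp only [mul_assoc]
    _ = (tE*tE)*(sE*sE) := by rw [B2]
    _ = tE*tE*sE*sE := by simp only [mul_assoc, one_mul, mul_one]

private lemma B7 : sE*sE*sE*tE*tE*sE = tE*sE*sE*tE*tE := by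
  calc sE*sE*sE*tE*tE*sE = sE*sE*sE*tE*tE*sE := rfl
    _ = (sE*sE*sE*tE)*(tE*sE) := by simp only [mul_assoc]
    _ = (tE*sE*sE*sE)*(tE*sE) := by rw [← B4]
    _ = tE*sE*sE*sE*tE*sE := by simp only [mul_assoc, one_mul, mul_one]
    _ = (tE*sE*sE)*(sE*tE*sE) := by simp only [mul_assoc]
    _ = (tE*sE*sE)*(tE*tE) := by rw [B1]
    _ = tE*sE*sE*tE*tE := by simp only [mul_assoc, one_mul, mul_one]

private lemma B8 : sE*sE*tE*tE*sE*sE = tE := by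
  calc sE*sE*tE*tE*sE*sE = sE*sE*tE*tE*sE*sE := rfl
    _ = (sE*sE)*(tE*tE*sE*sE) := by simp only [mul_assoc]
    _ = (sE*sE)*(sE*sE*sE*sE*tE) := by rw [← B5]
    _ = sE*sE*sE*sE*sE*sE*tE := by simp only [mul_assoc, one_mul, mul_one]
    _ = (sE*sE*sE*sE*sE*sE)*(tE) := by simp only [mul_assoc]
    _ = 1*(tE) := by rw [B6]
    _ = tE := by simp only [mul_assoc, one_mul, mul_one]

private lemma B9 : sE*tE*tE*sE*sE*tE = tE*sE := by
  calc sE*tE*tE*sE*sE*tE = sE*tE*tE*sE*sE*tE := rfl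
    _ = sE*(tE*tE)*(sE*sE*tE) := by simp only [mul_assoc]
    _ = sE*(sE*tE*sE)*(sE*sE*tE) := by rw [← B1]
    _ = sE*sE*tE*sE*sE*sE*tE := by simp only [mul_assoc, one_mul, mul_one]
    _ = (sE*sE*tE)*(sE*sE*sE*tE) := by simp only [mul_assoc]
    _ = (sE*sE*tE)*(tE*sE*sE*sE) := by rw [← B4]
    _ = sE*sE*tE*tE*sE*sE*sE := by simp only [mul_assoc, one_mul, mul_one]
    _ = (sE*sE*tE*tE*sE*sE)*(sE) := by simp only [mul_assoc]
    _ = (tE)*(sE) := by rw [B8]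
    _ = tE*sE := by simp only [mul_assoc, one_mul, mul_one]

private lemma B10 : tE*sE*sE*tE*tE*sE = sE*tE := by
  calc tE*sE*sE*tE*tE*sE = tE*sE*sE*tE*tE*sE := rfl
    _ = (tE*sE*sE*tE*tE)*(sE) := by simp only [mul_assoc]
    _ = (sE*sE*sE*tE*tE*sE)*(sE) := by rw [← B7]
    _ = sE*sE*sE*tE*tE*sE*sE := by simp only [mul_assoc, one_mul, mul_one]
    _ = sE*(sE*sE*tE*tE*sE*sE) := by simp only [mul_assoc]
    _ = sE*(tE) := by rw [B8]
    _ = sE*tE := by simp only [mul_assoc, one_mul, mul_one]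

private lemma B11 : tE*tE*sE*sE*tE*tE = sE := by
  calc tE*tE*sE*sE*tE*tE = tE*tE*sE*sE*tE*tE := rfl
    _ = (tE*tE*sE*sE)*(tE*tE) := by simp only [mul_assoc]
    _ = (sE*sE*sE*sE*tE)*(tE*tE) := by rw [← B5]
    _ = sE*sE*sE*sE*tE*tE*tE := by simp only [mul_assoc, one_mul, mul_one]
    _ = (sE*sE*sE*sE)*(tE*tE*tE) := by simp only [mul_assoc]
    _ = (sE*sE*sE*sE)*(sE*sE*sE) := by rw [hT3]
    _ = sE*sE*sE*sE*sE*sE*sE := by simp only [mul_assoc, one_mul, mul_one]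
    _ = (sE*sE*sE*sE*sE*sE)*(sE) := by simp only [mul_assoc]
    _ = 1*(sE) := by rw [B6]
    _ = sE := by simp only [mul_assoc, one_mul, mul_one]

private lemma R1_ap (x : BTet) : sE*(tE*(sE*(x))) = tE*(tE*(x)) := by
  simp only [← mul_assoc]; rw [B1]

private lemma R1_b : sE*(tE*(sE)) = tE*(tE) := by
  simp only [← mul_assoc]; rw [B1]

private lemma R2_ap (x : BTet) : tE*(sE*(tE*(x))) = sE*(sE*(x)) := by
  simp only [← mul_assoc]; rw [B2]

private lemma R2_b : tE*(sE*(tE)) = sE*(sE) := by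
  simp only [← mul_assoc]; rw [B2]

private lemma R3_ap (x : BTet) : tE*(tE*(tE*(x))) = sE*(sE*(sE*(x))) := by
  simp only [← mul_assoc]; rw [hT3]

private lemma R3_b : tE*(tE*(tE)) = sE*(sE*(sE)) := by
  simp only [← mul_assoc]; rw [hT3]

private lemma R4_ap (x : BTet) : tE*(sE*(sE*(sE*(x)))) = sE*(sE*(sE*(tE*(x)))) := by
  simp only [← mul_assoc]; rw [B4]

private lemma R4_b : tE*(sE*(sE*(sE))) = sE*(sE*(sE*(tE))) := by
  simp only [← mul_assoc]; rw [B4]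

private lemma R5_ap (x : BTet) : sE*(sE*(sE*(sE*(tE*(x))))) = tE*(tE*(sE*(sE*(x)))) := by
  simp only [← mul_assoc]; rw [B5]

private lemma R5_b : sE*(sE*(sE*(sE*(tE)))) = tE*(tE*(sE*(sE))) := by
  simp only [← mul_assoc]; rw [B5]

private lemma R6_ap (x : BTet) : sE*(sE*(sE*(sE*(sE*(sE*(x)))))) = x := by
  simp only [← mul_assoc]; rw [B6, one_mul]

private lemma R6_b : sE*(sE*(sE*(sE*(sE*(sE))))) = (1 : BTet) := by
  simp only [← mul_assoc]; rw [B6]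

private lemma R7_ap (x : BTet) : sE*(sE*(sE*(tE*(tE*(sE*(x)))))) = tE*(sE*(sE*(tE*(tE*(x))))) := by
  simp only [← mul_assoc]; rw [B7]

private lemma R7_b : sE*(sE*(sE*(tE*(tE*(sE))))) = tE*(sE*(sE*(tE*(tE)))) := by
  simp only [← mul_assoc]; rw [B7]

private lemma R8_ap (x : BTet) : sE*(sE*(tE*(tE*(sE*(sE*(x)))))) = tE*(x) := by
  simp only [← mul_assoc]; rw [B8]

private lemma R8_b : sE*(sE*(tE*(tE*(sE*(sE))))) = tE := by
  simp only [← mul_assoc]; rw [B8]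

private lemma R9_ap (x : BTet) : sE*(tE*(tE*(sE*(sE*(tE*(x)))))) = tE*(sE*(x)) := by
  simp only [← mul_assoc]; rw [B9]

private lemma R9_b : sE*(tE*(tE*(sE*(sE*(tE))))) = tE*(sE) := by
  simp only [← mul_assoc]; rw [B9]

private lemma R10_ap (x : BTet) : tE*(sE*(sE*(tE*(tE*(sE*(x)))))) = sE*(tE*(x)) := by
  simp only [← mul_assoc]; rw [B10]

private lemma R10_b : tE*(sE*(sE*(tE*(tE*(sE))))) = sE*(tE) := by
  simp only [← mul_assoc]; rw [B10]

private lemma R11_ap (x : BTet) : tE*(tE*(sE*(sE*(tE*(tE*(x)))))) = sE*(x) := by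
  simp only [← mul_assoc]; rw [B11]

private lemma R11_b : tE*(tE*(sE*(sE*(tE*(tE))))) = sE := by
  simp only [← mul_assoc]; rw [B11]

private def wd : Fin 24 → BTet
  | ⟨0,_⟩ => (1 : BTet)
  | ⟨1,_⟩ => sE
  | ⟨2,_⟩ => tE
  | ⟨3,_⟩ => sE*(sE)
  | ⟨4,_⟩ => sE*(tE)
  | ⟨5,_⟩ => tE*(sE)
  | ⟨6,_⟩ => tE*(tE)
  | ⟨7,_⟩ => sE*(sE*(sE))
  | ⟨8,_⟩ => sE*(sE*(tE))
  | ⟨9,_⟩ => sE*(tE*(tE))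
  | ⟨10,_⟩ => tE*(sE*(sE))
  | ⟨11,_⟩ => tE*(tE*(sE))
  | ⟨12,_⟩ => sE*(sE*(sE*(sE)))
  | ⟨13,_⟩ => sE*(sE*(sE*(tE)))
  | ⟨14,_⟩ => sE*(sE*(tE*(tE)))
  | ⟨15,_⟩ => sE*(tE*(tE*(sE)))
  | ⟨16,_⟩ => tE*(sE*(sE*(tE)))
  | ⟨17,_⟩ => tE*(tE*(sE*(sE)))
  | ⟨18,_⟩ => sE*(sE*(sE*(sE*(sE))))
  | ⟨19,_⟩ => sE*(sE*(sE*(tE*(tE))))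
  | ⟨20,_⟩ => sE*(sE*(tE*(tE*(sE))))
  | ⟨21,_⟩ => sE*(tE*(tE*(sE*(sE))))
  | ⟨22,_⟩ => tE*(sE*(sE*(tE*(tE))))
  | _ => tE*(tE*(sE*(sE*(tE))))

private def mats : Fin 24 → Matrix.SpecialLinearGroup (Fin 2) (ZMod 3)
  | ⟨0,_⟩ => 1
  | ⟨1,_⟩ => ⟨!![2,0;2,2], by decide⟩
  | ⟨2,_⟩ => ⟨!![2,2;0,2], by decide⟩
  | ⟨3,_⟩ => ⟨!![1,0;2,1], by decide⟩
  | ⟨4,_⟩ => ⟨!![1,1;1,2], by decide⟩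
  | ⟨5,_⟩ => ⟨!![2,1;1,1], by decide⟩
  | ⟨6,_⟩ => ⟨!![1,2;0,1], by decide⟩
  | ⟨7,_⟩ => ⟨!![2,0;0,2], by decide⟩
  | ⟨8,_⟩ => ⟨!![2,2;1,0], by decide⟩
  | ⟨9,_⟩ => ⟨!![2,1;2,0], by decide⟩
  | ⟨10,_⟩ => ⟨!![0,2;1,2], by decide⟩
  | ⟨11,_⟩ => ⟨!![0,1;2,2], by decide⟩
  | ⟨12,_⟩ => ⟨!![1,0;1,1], by decide⟩
  | ⟨13,_⟩ => ⟨!![1,1;0,1], by decide⟩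
  | ⟨14,_⟩ => ⟨!![1,2;2,2], by decide⟩
  | ⟨15,_⟩ => ⟨!![0,2;1,0], by decide⟩
  | ⟨16,_⟩ => ⟨!![0,1;2,0], by decide⟩
  | ⟨17,_⟩ => ⟨!![2,2;2,1], by decide⟩
  | ⟨18,_⟩ => ⟨!![2,0;1,2], by decide⟩
  | ⟨19,_⟩ => ⟨!![2,1;0,2], by decide⟩
  | ⟨20,_⟩ => ⟨!![0,1;2,1], by decide⟩
  | ⟨21,_⟩ => ⟨!![1,1;2,0], by decide⟩
  | ⟨22,_⟩ => ⟨!![0,2;1,1], by decide⟩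
  | _ => ⟨!![1,2;1,0], by decide⟩

private def sigS : Fin 24 → Fin 24
  | ⟨0,_⟩ => 1
  | ⟨1,_⟩ => 3
  | ⟨2,_⟩ => 5
  | ⟨3,_⟩ => 7
  | ⟨4,_⟩ => 6
  | ⟨5,_⟩ => 10
  | ⟨6,_⟩ => 11
  | ⟨7,_⟩ => 12
  | ⟨8,_⟩ => 9
  | ⟨9,_⟩ => 15
  | ⟨10,_⟩ => 13
  | ⟨11,_⟩ => 17
  | ⟨12,_⟩ => 18
  | ⟨13,_⟩ => 14
  | ⟨14,_⟩ => 20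
  | ⟨15,_⟩ => 21
  | ⟨16,_⟩ => 8
  | ⟨17,_⟩ => 19
  | ⟨18,_⟩ => 0
  | ⟨19,_⟩ => 22
  | ⟨20,_⟩ => 2
  | ⟨21,_⟩ => 23
  | ⟨22,_⟩ => 4
  | _ => 16

private def sigT : Fin 24 → Fin 24
  | ⟨0,_⟩ => 2
  | ⟨1,_⟩ => 4
  | ⟨2,_⟩ => 6
  | ⟨3,_⟩ => 8
  | ⟨4,_⟩ => 9
  | ⟨5,_⟩ => 3
  | ⟨6,_⟩ => 7
  | ⟨7,_⟩ => 13
  | ⟨8,_⟩ => 14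
  | ⟨9,_⟩ => 12
  | ⟨10,_⟩ => 16
  | ⟨11,_⟩ => 10
  | ⟨12,_⟩ => 17
  | ⟨13,_⟩ => 19
  | ⟨14,_⟩ => 18
  | ⟨15,_⟩ => 11
  | ⟨16,_⟩ => 22
  | ⟨17,_⟩ => 23
  | ⟨18,_⟩ => 21
  | ⟨19,_⟩ => 0
  | ⟨20,_⟩ => 15
  | ⟨21,_⟩ => 5
  | ⟨22,_⟩ => 20
  | _ => 1

private lemma ws0 : (1 : BTet) * sE = sE := by
  simp only [mul_assoc, one_mul, mul_one, R1_ap, R1_b, R2_ap, R2_b, R3_ap, R3_b, R4_ap, R4_b, R5_ap, R5_b, R6_ap, R6_b, R7_ap, R7_b, R8_ap, R8_b, R9_ap, R9_b, R10_ap, R10_b, R11_ap, R11_b]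

private lemma ws1 : sE * sE = sE*(sE) := by
  simp only [mul_assoc, one_mul, mul_one, R1_ap, R1_b, R2_ap, R2_b, R3_ap, R3_b, R4_ap, R4_b, R5_ap, R5_b, R6_ap, R6_b, R7_ap, R7_b, R8_ap, R8_b, R9_ap, R9_b, R10_ap, R10_b, R11_ap, R11_b]

private lemma ws2 : tE * sE = tE*(sE) := by
  simp only [mul_assoc, one_mul, mul_one, R1_ap, R1_b, R2_ap, R2_b, R3_ap, R3_b, R4_ap, R4_b, R5_ap, R5_b, R6_ap, R6_b, R7_ap, R7_b, R8_ap, R8_b, R9_ap, R9_b, R10_ap, R10_b, R11_ap, R11_b]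

private lemma ws3 : sE*(sE) * sE = sE*(sE*(sE)) := by
  simp only [mul_assoc, one_mul, mul_one, R1_ap, R1_b, R2_ap, R2_b, R3_ap, R3_b, R4_ap, R4_b, R5_ap, R5_b, R6_ap, R6_b, R7_ap, R7_b, R8_ap, R8_b, R9_ap, R9_b, R10_ap, R10_b, R11_ap, R11_b]

private lemma ws4 : sE*(tE) * sE = tE*(tE) := by
  simp only [mul_assoc, one_mul, mul_one, R1_ap, R1_b, R2_ap, R2_b, R3_ap, R3_b, R4_ap, R4_b, R5_ap, R5_b, R6_ap, R6_b, R7_ap, R7_b, R8_ap, R8_b, R9_ap, R9_b, R10_ap, R10_b, R11_ap, R11_b]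

private lemma ws5 : tE*(sE) * sE = tE*(sE*(sE)) := by
  simp only [mul_assoc, one_mul, mul_one, R1_ap, R1_b, R2_ap, R2_b, R3_ap, R3_b, R4_ap, R4_b, R5_ap, R5_b, R6_ap, R6_b, R7_ap, R7_b, R8_ap, R8_b, R9_ap, R9_b, R10_ap, R10_b, R11_ap, R11_b]

private lemma ws6 : tE*(tE) * sE = tE*(tE*(sE)) := by
  simp only [mul_assoc, one_mul, mul_one, R1_ap, R1_b, R2_ap, R2_b, R3_ap, R3_b, R4_ap, R4_b, R5_ap, R5_b, R6_ap, R6_b, R7_ap, R7_b, R8_ap, R8_b, R9_ap, R9_b, R10_ap, R10_b, R11_ap, R11_b]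

private lemma ws7 : sE*(sE*(sE)) * sE = sE*(sE*(sE*(sE))) := by
  simp only [mul_assoc, one_mul, mul_one, R1_ap, R1_b, R2_ap, R2_b, R3_ap, R3_b, R4_ap, R4_b, R5_ap, R5_b, R6_ap, R6_b, R7_ap, R7_b, R8_ap, R8_b, R9_ap, R9_b, R10_ap, R10_b, R11_ap, R11_b]

private lemma ws8 : sE*(sE*(tE)) * sE = sE*(tE*(tE)) := by
  simp only [mul_assoc, one_mul, mul_one, R1_ap, R1_b, R2_ap, R2_b, R3_ap, R3_b, R4_ap, R4_b, R5_ap, R5_b, R6_ap, R6_b, R7_ap, R7_b, R8_ap, R8_b, R9_ap, R9_b, R10_ap, R10_b, R11_ap, R11_b]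

private lemma ws9 : sE*(tE*(tE)) * sE = sE*(tE*(tE*(sE))) := by
  simp only [mul_assoc, one_mul, mul_one, R1_ap, R1_b, R2_ap, R2_b, R3_ap, R3_b, R4_ap, R4_b, R5_ap, R5_b, R6_ap, R6_b, R7_ap, R7_b, R8_ap, R8_b, R9_ap, R9_b, R10_ap, R10_b, R11_ap, R11_b]

private lemma ws10 : tE*(sE*(sE)) * sE = sE*(sE*(sE*(tE))) := by
  simp only [mul_assoc, one_mul, mul_one, R1_ap, R1_b, R2_ap, R2_b, R3_ap, R3_b, R4_ap, R4_b, R5_ap, R5_b, R6_ap, R6_b, R7_ap, R7_b, R8_ap, R8_b, R9_ap, R9_b, R10_ap, R10_b, R11_ap, R11_b]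

private lemma ws11 : tE*(tE*(sE)) * sE = tE*(tE*(sE*(sE))) := by
  simp only [mul_assoc, one_mul, mul_one, R1_ap, R1_b, R2_ap, R2_b, R3_ap, R3_b, R4_ap, R4_b, R5_ap, R5_b, R6_ap, R6_b, R7_ap, R7_b, R8_ap, R8_b, R9_ap, R9_b, R10_ap, R10_b, R11_ap, R11_b]

private lemma ws12 : sE*(sE*(sE*(sE))) * sE = sE*(sE*(sE*(sE*(sE)))) := by
  simp only [mul_assoc, one_mul, mul_one, R1_ap, R1_b, R2_ap, R2_b, R3_ap, R3_b, R4_ap, R4_b, R5_ap, R5_b, R6_ap, R6_b, R7_ap, R7_b, R8_ap, R8_b, R9_ap, R9_b, R10_ap, R10_b, R11_ap, R11_b]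

private lemma ws13 : sE*(sE*(sE*(tE))) * sE = sE*(sE*(tE*(tE))) := by
  simp only [mul_assoc, one_mul, mul_one, R1_ap, R1_b, R2_ap, R2_b, R3_ap, R3_b, R4_ap, R4_b, R5_ap, R5_b, R6_ap, R6_b, R7_ap, R7_b, R8_ap, R8_b, R9_ap, R9_b, R10_ap, R10_b, R11_ap, R11_b]

private lemma ws14 : sE*(sE*(tE*(tE))) * sE = sE*(sE*(tE*(tE*(sE)))) := by
  simp only [mul_assoc, one_mul, mul_one, R1_ap, R1_b, R2_ap, R2_b, R3_ap, R3_b, R4_ap, R4_b, R5_ap, R5_b, R6_ap, R6_b, R7_ap, R7_b, R8_ap, R8_b, R9_ap, R9_b, R10_ap, R10_b, R11_ap, R11_b]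

private lemma ws15 : sE*(tE*(tE*(sE))) * sE = sE*(tE*(tE*(sE*(sE)))) := by
  simp only [mul_assoc, one_mul, mul_one, R1_ap, R1_b, R2_ap, R2_b, R3_ap, R3_b, R4_ap, R4_b, R5_ap, R5_b, R6_ap, R6_b, R7_ap, R7_b, R8_ap, R8_b, R9_ap, R9_b, R10_ap, R10_b, R11_ap, R11_b]

private lemma ws16 : tE*(sE*(sE*(tE))) * sE = sE*(sE*(tE)) := by
  simp only [mul_assoc, one_mul, mul_one, R1_ap, R1_b, R2_ap, R2_b, R3_ap, R3_b, R4_ap, R4_b, R5_ap, R5_b, R6_ap, R6_b, R7_ap, R7_b, R8_ap, R8_b, R9_ap, R9_b, R10_ap, R10_b, R11_ap, R11_b]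

private lemma ws17 : tE*(tE*(sE*(sE))) * sE = sE*(sE*(sE*(tE*(tE)))) := by
  simp only [mul_assoc, one_mul, mul_one, R1_ap, R1_b, R2_ap, R2_b, R3_ap, R3_b, R4_ap, R4_b, R5_ap, R5_b, R6_ap, R6_b, R7_ap, R7_b, R8_ap, R8_b, R9_ap, R9_b, R10_ap, R10_b, R11_ap, R11_b]

private lemma ws18 : sE*(sE*(sE*(sE*(sE)))) * sE = (1 : BTet) := by
  simp only [mul_assoc, one_mul, mul_one, R1_ap, R1_b, R2_ap, R2_b, R3_ap, R3_b, R4_ap, R4_b, R5_ap, R5_b, R6_ap, R6_b, R7_ap, R7_b, R8_ap, R8_b, R9_ap, R9_b, R10_ap, R10_b, R11_ap, R11_b]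

private lemma ws19 : sE*(sE*(sE*(tE*(tE)))) * sE = tE*(sE*(sE*(tE*(tE)))) := by
  simp only [mul_assoc, one_mul, mul_one, R1_ap, R1_b, R2_ap, R2_b, R3_ap, R3_b, R4_ap, R4_b, R5_ap, R5_b, R6_ap, R6_b, R7_ap, R7_b, R8_ap, R8_b, R9_ap, R9_b, R10_ap, R10_b, R11_ap, R11_b]

private lemma ws20 : sE*(sE*(tE*(tE*(sE)))) * sE = tE := by
  simp only [mul_assoc, one_mul, mul_one, R1_ap, R1_b, R2_ap, R2_b, R3_ap, R3_b, R4_ap, R4_b, R5_ap, R5_b, R6_ap, R6_b, R7_ap, R7_b, R8_ap, R8_b, R9_ap, R9_b, R10_ap, R10_b, R11_ap, R11_b]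

private lemma ws21 : sE*(tE*(tE*(sE*(sE)))) * sE = tE*(tE*(sE*(sE*(tE)))) := by
  simp only [mul_assoc, one_mul, mul_one, R1_ap, R1_b, R2_ap, R2_b, R3_ap, R3_b, R4_ap, R4_b, R5_ap, R5_b, R6_ap, R6_b, R7_ap, R7_b, R8_ap, R8_b, R9_ap, R9_b, R10_ap, R10_b, R11_ap, R11_b]

private lemma ws22 : tE*(sE*(sE*(tE*(tE)))) * sE = sE*(tE) := by
  simp only [mul_assoc, one_mul, mul_one, R1_ap, R1_b, R2_ap, R2_b, R3_ap, R3_b, R4_ap, R4_b, R5_ap, R5_b, R6_ap, R6_b, R7_ap, R7_b, R8_ap, R8_b, R9_ap, R9_b, R10_ap, R10_b, R11_ap, R11_b]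

private lemma ws23 : tE*(tE*(sE*(sE*(tE)))) * sE = tE*(sE*(sE*(tE))) := by
  simp only [mul_assoc, one_mul, mul_one, R1_ap, R1_b, R2_ap, R2_b, R3_ap, R3_b, R4_ap, R4_b, R5_ap, R5_b, R6_ap, R6_b, R7_ap, R7_b, R8_ap, R8_b, R9_ap, R9_b, R10_ap, R10_b, R11_ap, R11_b]

private lemma wt0 : (1 : BTet) * tE = tE := by
  simp only [mul_assoc, one_mul, mul_one, R1_ap, R1_b, R2_ap, R2_b, R3_ap, R3_b, R4_ap, R4_b, R5_ap, R5_b, R6_ap, R6_b, R7_ap, R7_b, R8_ap, R8_b, R9_ap, R9_b, R10_ap, R10_b, R11_ap, R11_b]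

private lemma wt1 : sE * tE = sE*(tE) := by
  simp only [mul_assoc, one_mul, mul_one, R1_ap, R1_b, R2_ap, R2_b, R3_ap, R3_b, R4_ap, R4_b, R5_ap, R5_b, R6_ap, R6_b, R7_ap, R7_b, R8_ap, R8_b, R9_ap, R9_b, R10_ap, R10_b, R11_ap, R11_b]

private lemma wt2 : tE * tE = tE*(tE) := by
  simp only [mul_assoc, one_mul, mul_one, R1_ap, R1_b, R2_ap, R2_b, R3_ap, R3_b, R4_ap, R4_b, R5_ap, R5_b, R6_ap, R6_b, R7_ap, R7_b, R8_ap, R8_b, R9_ap, R9_b, R10_ap, R10_b, R11_ap, R11_b]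

private lemma wt3 : sE*(sE) * tE = sE*(sE*(tE)) := by
  simp only [mul_assoc, one_mul, mul_one, R1_ap, R1_b, R2_ap, R2_b, R3_ap, R3_b, R4_ap, R4_b, R5_ap, R5_b, R6_ap, R6_b, R7_ap, R7_b, R8_ap, R8_b, R9_ap, R9_b, R10_ap, R10_b, R11_ap, R11_b]

private lemma wt4 : sE*(tE) * tE = sE*(tE*(tE)) := by
  simp only [mul_assoc, one_mul, mul_one, R1_ap, R1_b, R2_ap, R2_b, R3_ap, R3_b, R4_ap, R4_b, R5_ap, R5_b, R6_ap, R6_b, R7_ap, R7_b, R8_ap, R8_b, R9_ap, R9_b, R10_ap, R10_b, R11_ap, R11_b]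

private lemma wt5 : tE*(sE) * tE = sE*(sE) := by
  simp only [mul_assoc, one_mul, mul_one, R1_ap, R1_b, R2_ap, R2_b, R3_ap, R3_b, R4_ap, R4_b, R5_ap, R5_b, R6_ap, R6_b, R7_ap, R7_b, R8_ap, R8_b, R9_ap, R9_b, R10_ap, R10_b, R11_ap, R11_b]

private lemma wt6 : tE*(tE) * tE = sE*(sE*(sE)) := by
  simp only [mul_assoc, one_mul, mul_one, R1_ap, R1_b, R2_ap, R2_b, R3_ap, R3_b, R4_ap, R4_b, R5_ap, R5_b, R6_ap, R6_b, R7_ap, R7_b, R8_ap, R8_b, R9_ap, R9_b, R10_ap, R10_b, R11_ap, R11_b]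

private lemma wt7 : sE*(sE*(sE)) * tE = sE*(sE*(sE*(tE))) := by
  simp only [mul_assoc, one_mul, mul_one, R1_ap, R1_b, R2_ap, R2_b, R3_ap, R3_b, R4_ap, R4_b, R5_ap, R5_b, R6_ap, R6_b, R7_ap, R7_b, R8_ap, R8_b, R9_ap, R9_b, R10_ap, R10_b, R11_ap, R11_b]

private lemma wt8 : sE*(sE*(tE)) * tE = sE*(sE*(tE*(tE))) := by
  simp only [mul_assoc, one_mul, mul_one, R1_ap, R1_b, R2_ap, R2_b, R3_ap, R3_b, R4_ap, R4_b, R5_ap, R5_b, R6_ap, R6_b, R7_ap, R7_b, R8_ap, R8_b, R9_ap, R9_b, R10_ap, R10_b, R11_ap, R11_b]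

private lemma wt9 : sE*(tE*(tE)) * tE = sE*(sE*(sE*(sE))) := by
  simp only [mul_assoc, one_mul, mul_one, R1_ap, R1_b, R2_ap, R2_b, R3_ap, R3_b, R4_ap, R4_b, R5_ap, R5_b, R6_ap, R6_b, R7_ap, R7_b, R8_ap, R8_b, R9_ap, R9_b, R10_ap, R10_b, R11_ap, R11_b]

private lemma wt10 : tE*(sE*(sE)) * tE = tE*(sE*(sE*(tE))) := by
  simp only [mul_assoc, one_mul, mul_one, R1_ap, R1_b, R2_ap, R2_b, R3_ap, R3_b, R4_ap, R4_b, R5_ap, R5_b, R6_ap, R6_b, R7_ap, R7_b, R8_ap, R8_b, R9_ap, R9_b, R10_ap, R10_b, R11_ap, R11_b]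

private lemma wt11 : tE*(tE*(sE)) * tE = tE*(sE*(sE)) := by
  simp only [mul_assoc, one_mul, mul_one, R1_ap, R1_b, R2_ap, R2_b, R3_ap, R3_b, R4_ap, R4_b, R5_ap, R5_b, R6_ap, R6_b, R7_ap, R7_b, R8_ap, R8_b, R9_ap, R9_b, R10_ap, R10_b, R11_ap, R11_b]

private lemma wt12 : sE*(sE*(sE*(sE))) * tE = tE*(tE*(sE*(sE))) := by
  simp only [mul_assoc, one_mul, mul_one, R1_ap, R1_b, R2_ap, R2_b, R3_ap, R3_b, R4_ap, R4_b, R5_ap, R5_b, R6_ap, R6_b, R7_ap, R7_b, R8_ap, R8_b, R9_ap, R9_b, R10_ap, R10_b, R11_ap, R11_b]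

private lemma wt13 : sE*(sE*(sE*(tE))) * tE = sE*(sE*(sE*(tE*(tE)))) := by
  simp only [mul_assoc, one_mul, mul_one, R1_ap, R1_b, R2_ap, R2_b, R3_ap, R3_b, R4_ap, R4_b, R5_ap, R5_b, R6_ap, R6_b, R7_ap, R7_b, R8_ap, R8_b, R9_ap, R9_b, R10_ap, R10_b, R11_ap, R11_b]

private lemma wt14 : sE*(sE*(tE*(tE))) * tE = sE*(sE*(sE*(sE*(sE)))) := by
  simp only [mul_assoc, one_mul, mul_one, R1_ap, R1_b, R2_ap, R2_b, R3_ap, R3_b, R4_ap, R4_b, R5_ap, R5_b, R6_ap, R6_b, R7_ap, R7_b, R8_ap, R8_b, R9_ap, R9_b, R10_ap, R10_b, R11_ap, R11_b]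

private lemma wt15 : sE*(tE*(tE*(sE))) * tE = tE*(tE*(sE)) := by
  simp only [mul_assoc, one_mul, mul_one, R1_ap, R1_b, R2_ap, R2_b, R3_ap, R3_b, R4_ap, R4_b, R5_ap, R5_b, R6_ap, R6_b, R7_ap, R7_b, R8_ap, R8_b, R9_ap, R9_b, R10_ap, R10_b, R11_ap, R11_b]

private lemma wt16 : tE*(sE*(sE*(tE))) * tE = tE*(sE*(sE*(tE*(tE)))) := by
  simp only [mul_assoc, one_mul, mul_one, R1_ap, R1_b, R2_ap, R2_b, R3_ap, R3_b, R4_ap, R4_b, R5_ap, R5_b, R6_ap, R6_b, R7_ap, R7_b, R8_ap, R8_b, R9_ap, R9_b, R10_ap, R10_b, R11_ap, R11_b]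

private lemma wt17 : tE*(tE*(sE*(sE))) * tE = tE*(tE*(sE*(sE*(tE)))) := by
  simp only [mul_assoc, one_mul, mul_one, R1_ap, R1_b, R2_ap, R2_b, R3_ap, R3_b, R4_ap, R4_b, R5_ap, R5_b, R6_ap, R6_b, R7_ap, R7_b, R8_ap, R8_b, R9_ap, R9_b, R10_ap, R10_b, R11_ap, R11_b]

private lemma wt18 : sE*(sE*(sE*(sE*(sE)))) * tE = sE*(tE*(tE*(sE*(sE)))) := by
  simp only [mul_assoc, one_mul, mul_one, R1_ap, R1_b, R2_ap, R2_b, R3_ap, R3_b, R4_ap, R4_b, R5_ap, R5_b, R6_ap, R6_b, R7_ap, R7_b, R8_ap, R8_b, R9_ap, R9_b, R10_ap, R10_b, R11_ap, R11_b]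

private lemma wt19 : sE*(sE*(sE*(tE*(tE)))) * tE = (1 : BTet) := by
  simp only [mul_assoc, one_mul, mul_one, R1_ap, R1_b, R2_ap, R2_b, R3_ap, R3_b, R4_ap, R4_b, R5_ap, R5_b, R6_ap, R6_b, R7_ap, R7_b, R8_ap, R8_b, R9_ap, R9_b, R10_ap, R10_b, R11_ap, R11_b]

private lemma wt20 : sE*(sE*(tE*(tE*(sE)))) * tE = sE*(tE*(tE*(sE))) := by
  simp only [mul_assoc, one_mul, mul_one, R1_ap, R1_b, R2_ap, R2_b, R3_ap, R3_b, R4_ap, R4_b, R5_ap, R5_b, R6_ap, R6_b, R7_ap, R7_b, R8_ap, R8_b, R9_ap, R9_b, R10_ap, R10_b, R11_ap, R11_b]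

private lemma wt21 : sE*(tE*(tE*(sE*(sE)))) * tE = tE*(sE) := by
  simp only [mul_assoc, one_mul, mul_one, R1_ap, R1_b, R2_ap, R2_b, R3_ap, R3_b, R4_ap, R4_b, R5_ap, R5_b, R6_ap, R6_b, R7_ap, R7_b, R8_ap, R8_b, R9_ap, R9_b, R10_ap, R10_b, R11_ap, R11_b]

private lemma wt22 : tE*(sE*(sE*(tE*(tE)))) * tE = sE*(sE*(tE*(tE*(sE)))) := by
  simp only [mul_assoc, one_mul, mul_one, R1_ap, R1_b, R2_ap, R2_b, R3_ap, R3_b, R4_ap, R4_b, R5_ap, R5_b, R6_ap, R6_b, R7_ap, R7_b, R8_ap, R8_b, R9_ap, R9_b, R10_ap, R10_b, R11_ap, R11_b]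

private lemma wt23 : tE*(tE*(sE*(sE*(tE)))) * tE = sE := by
  simp only [mul_assoc, one_mul, mul_one, R1_ap, R1_b, R2_ap, R2_b, R3_ap, R3_b, R4_ap, R4_b, R5_ap, R5_b, R6_ap, R6_b, R7_ap, R7_b, R8_ap, R8_b, R9_ap, R9_b, R10_ap, R10_b, R11_ap, R11_b]

private def fgen : Bool → Matrix.SpecialLinearGroup (Fin 2) (ZMod 3)
  | true => -Bsl
  | false => -Asl

private lemma hrels : ∀ r ∈ btetRels, FreeGroup.lift fgen r = 1 := by
  intro r hr
  rcases hr with rfl | rfl | rfl <;>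
    · simp only [_root_.map_mul, map_pow, map_inv, FreeGroup.lift_apply_of, fgen]
      decide

private def phi : BTet →* Matrix.SpecialLinearGroup (Fin 2) (ZMod 3) :=
  PresentedGroup.toGroup hrels

private lemma phi_s : phi sE = -Bsl := PresentedGroup.toGroup.of hrels
private lemma phi_t : phi tE = -Asl := PresentedGroup.toGroup.of hrels

private lemma pw0 : phi (1 : BTet) = mats 0 := by rw [_root_.map_one]; decide

private lemma pw1 : phi (sE) = mats 1 := by
  simp only [_root_.map_mul, phi_s, phi_t]; decide

private lemma pw2 : phi (tE) = mats 2 := by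
  simp only [_root_.map_mul, phi_s, phi_t]; decide

private lemma pw3 : phi (sE*(sE)) = mats 3 := by
  simp only [_root_.map_mul, phi_s, phi_t]; decide

private lemma pw4 : phi (sE*(tE)) = mats 4 := by
  simp only [_root_.map_mul, phi_s, phi_t]; decide

private lemma pw5 : phi (tE*(sE)) = mats 5 := by
  simp only [_root_.map_mul, phi_s, phi_t]; decide

private lemma pw6 : phi (tE*(tE)) = mats 6 := by
  simp only [_root_.map_mul, phi_s, phi_t]; decide

private lemma pw7 : phi (sE*(sE*(sE))) = mats 7 := by
  simp only [_root_.map_mul, phi_s, phi_t]; decide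

private lemma pw8 : phi (sE*(sE*(tE))) = mats 8 := by
  simp only [_root_.map_mul, phi_s, phi_t]; decide

private lemma pw9 : phi (sE*(tE*(tE))) = mats 9 := by
  simp only [_root_.map_mul, phi_s, phi_t]; decide

private lemma pw10 : phi (tE*(sE*(sE))) = mats 10 := by
  simp only [_root_.map_mul, phi_s, phi_t]; decide

private lemma pw11 : phi (tE*(tE*(sE))) = mats 11 := by
  simp only [_root_.map_mul, phi_s, phi_t]; decide

private lemma pw12 : phi (sE*(sE*(sE*(sE)))) = mats 12 := by
  simp only [_root_.map_mul, phi_s, phi_t]; decide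

private lemma pw13 : phi (sE*(sE*(sE*(tE)))) = mats 13 := by
  simp only [_root_.map_mul, phi_s, phi_t]; decide

private lemma pw14 : phi (sE*(sE*(tE*(tE)))) = mats 14 := by
  simp only [_root_.map_mul, phi_s, phi_t]; decide

private lemma pw15 : phi (sE*(tE*(tE*(sE)))) = mats 15 := by
  simp only [_root_.map_mul, phi_s, phi_t]; decide

private lemma pw16 : phi (tE*(sE*(sE*(tE)))) = mats 16 := by
  simp only [_root_.map_mul, phi_s, phi_t]; decide

private lemma pw17 : phi (tE*(tE*(sE*(sE)))) = mats 17 := by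
  simp only [_root_.map_mul, phi_s, phi_t]; decide

private lemma pw18 : phi (sE*(sE*(sE*(sE*(sE))))) = mats 18 := by
  simp only [_root_.map_mul, phi_s, phi_t]; decide

private lemma pw19 : phi (sE*(sE*(sE*(tE*(tE))))) = mats 19 := by
  simp only [_root_.map_mul, phi_s, phi_t]; decide

private lemma pw20 : phi (sE*(sE*(tE*(tE*(sE))))) = mats 20 := by
  simp only [_root_.map_mul, phi_s, phi_t]; decide

private lemma pw21 : phi (sE*(tE*(tE*(sE*(sE))))) = mats 21 := by
  simp only [_root_.map_mul, phi_s, phi_t]; decide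

private lemma pw22 : phi (tE*(sE*(sE*(tE*(tE))))) = mats 22 := by
  simp only [_root_.map_mul, phi_s, phi_t]; decide

private lemma pw23 : phi (tE*(tE*(sE*(sE*(tE))))) = mats 23 := by
  simp only [_root_.map_mul, phi_s, phi_t]; decide

private lemma hws : ∀ i, wd i * sE = wd (sigS i) := by
  intro i; fin_cases i
  exacts [ws0, ws1, ws2, ws3, ws4, ws5, ws6, ws7, ws8, ws9, ws10, ws11, ws12, ws13, ws14, ws15, ws16, ws17, ws18, ws19, ws20, ws21, ws22, ws23]

private lemma hwt : ∀ i, wd i * tE = wd (sigT i) := by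
  intro i; fin_cases i
  exacts [wt0, wt1, wt2, wt3, wt4, wt5, wt6, wt7, wt8, wt9, wt10, wt11, wt12, wt13, wt14, wt15, wt16, wt17, wt18, wt19, wt20, wt21, wt22, wt23]

private lemma hphiw : ∀ i, phi (wd i) = mats i := by
  intro i; fin_cases i
  exacts [pw0, pw1, pw2, pw3, pw4, pw5, pw6, pw7, pw8, pw9, pw10, pw11, pw12, pw13, pw14, pw15, pw16, pw17, pw18, pw19, pw20, pw21, pw22, pw23]

private lemma hms : ∀ i, mats i * (-Bsl) = mats (sigS i) := by decide

private lemma hmt : ∀ i, mats i * (-Asl) = mats (sigT i) := by decide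

private lemma matsinj : Function.Injective mats := by decide

private lemma matssurj : ∀ m : Matrix.SpecialLinearGroup (Fin 2) (ZMod 3), ∃ i, mats i = m := by
  decide

private def HH : Subgroup BTet where
  carrier := {y | ∀ i, ∃ j, wd i * y = wd j ∧ mats i * phi y = mats j}
  one_mem' := fun i => ⟨i, by rw [mul_one], by rw [_root_.map_one, mul_one]⟩
  mul_mem' := by
    intro a b ha hb i
    obtain ⟨j, h1, h2⟩ := ha i
    obtain ⟨k, h3, h4⟩ := hb j
    exact ⟨k, by rw [← mul_assoc, h1, h3], by rw [_root_.map_mul, ← mul_assoc, h2, h4]⟩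
  inv_mem' := by
    intro a ha
    simp only [Set.mem_setOf_eq] at ha ⊢
    intro i
    have hinj : Function.Injective (fun i => (ha i).choose) := by
      intro i1 i2 h
      have h' : (ha i1).choose = (ha i2).choose := h
      apply matsinj
      have e1 := (ha i1).choose_spec.2
      have e2 := (ha i2).choose_spec.2
      have e3 : mats i1 * phi a = mats i2 * phi a := by rw [e1, e2, h']
      exact mul_right_cancel e3
    obtain ⟨i', hi'⟩ := Finite.injective_iff_surjective.mp hinj i
    have hi2 : (ha i').choose = i := hi'
    have hc1 := (ha i').choose_spec.1
    have hc2 := (ha i').choose_spec.2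
    rw [hi2] at hc1 hc2
    refine ⟨i', ?_, ?_⟩
    · rw [mul_inv_eq_iff_eq_mul, ← hc1]
    · rw [map_inv, mul_inv_eq_iff_eq_mul, ← hc2]

private lemma key (y : BTet) : ∀ i, ∃ j, wd i * y = wd j ∧ mats i * phi y = mats j := by
  have hy : y ∈ HH := by
    apply PresentedGroup.generated_by
    intro b
    cases b
    · intro i
      exact ⟨sigT i, hwt i, by rw [show phi (PresentedGroup.of false) = -Asl from phi_t, hmt]⟩
    · intro i
      exact ⟨sigS i, hws i, by rw [show phi (PresentedGroup.of true) = -Bsl from phi_s, hms]⟩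
  exact hy

/-- The binary tetrahedral group is isomorphic to `SL(2, 𝔽₃)` via the map
sending `t` to `−A` and `s` to `−B`. -/
theorem btet_iso_sl2_f3 :
    ∃ φ : BTet ≃* Matrix.SpecialLinearGroup (Fin 2) (ZMod 3),
      φ (PresentedGroup.of false) = -Asl ∧ φ (PresentedGroup.of true) = -Bsl := by
  have hinj : Function.Injective phi := by
    intro y1 y2 h
    obtain ⟨j1, e1, m1⟩ := key y1 0
    obtain ⟨j2, e2, m2⟩ := key y2 0
    rw [show (wd 0 : BTet) = 1 from rfl, one_mul] at e1 e2
    rw [show mats 0 = 1 from rfl, one_mul] at m1 m2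
    have hj : j1 = j2 := matsinj (by rw [← m1, ← m2, h])
    rw [e1, e2, hj]
  have hsurj : Function.Surjective phi := by
    intro m
    obtain ⟨i, hi⟩ := matssurj m
    exact ⟨wd i, by rw [hphiw i, hi]⟩
  exact ⟨MulEquiv.ofBijective phi ⟨hinj, hsurj⟩, phi_t, phi_s⟩
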